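/- Let M be a globally hyperbolic spacetime with Cauchy temporal function 𝒯, and I ⊂ ℝ an interval. The set A_𝒯^I of continuous future-directed causal curves γ: I → M with 𝒯∘γ = id_I is a closed subset of C(I,M) with the compact-open topology; in particular A_𝒯^I is a Polish space. -/

import Mathlib

open Set Topology

lemma ordConnected_weaklyLocallyCompact {I : Set ℝ} (hI : I.OrdConnected) :
    WeaklyLocallyCompactSpace I := by
  constructor
  intro x
  -- lower bound
  obtain ⟨a, haI, hax, L, hLopen, hxL, hL⟩ :
      ∃ a ∈ I, a ≤ (x : ℝ) ∧ ∃ L : Set ℝ, IsOpen L ∧ (x : ℝ) ∈ L ∧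
        ∀ y ∈ I, y ∈ L → a ≤ y := by
    by_cases h : ∃ a ∈ I, a < (x : ℝ)
    · obtain ⟨a, haI, hax⟩ := h
      exact ⟨a, haI, hax.le, Ioi a, isOpen_Ioi, hax, fun y _ hy => le_of_lt hy⟩
    · push_neg at h
      exact ⟨x, x.2, le_rfl, univ, isOpen_univ, mem_univ _, fun y hy _ => h y hy⟩
  obtain ⟨b, hbI, hxb, U, hUopen, hxU, hU⟩ :
      ∃ b ∈ I, (x : ℝ) ≤ b ∧ ∃ U : Set ℝ, IsOpen U ∧ (x : ℝ) ∈ U ∧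
        ∀ y ∈ I, y ∈ U → y ≤ b := by
    by_cases h : ∃ b ∈ I, (x : ℝ) < b
    · obtain ⟨b, hbI, hxb⟩ := h
      exact ⟨b, hbI, hxb.le, Iio b, isOpen_Iio, hxb, fun y _ hy => le_of_lt hy⟩
    · push_neg at h
      exact ⟨x, x.2, le_rfl, univ, isOpen_univ, mem_univ _, fun y hy _ => h y hy⟩
  refine ⟨Subtype.val ⁻¹' Icc a b, ?_, ?_⟩
  · rw [IsEmbedding.subtypeVal.isCompact_iff]
    have himg : Subtype.val '' (Subtype.val ⁻¹' Icc a b : Set I) = Icc a b := by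
      rw [Subtype.image_preimage_coe]
      exact inter_eq_right.mpr (hI.out haI hbI)
    rw [himg]
    exact isCompact_Icc
  · have hmem : Icc a b ∈ 𝓝[I] (x : ℝ) := by
      refine mem_nhdsWithin.mpr ⟨L ∩ U, hLopen.inter hUopen, ⟨hxL, hxU⟩, ?_⟩
      rintro y ⟨⟨hyL, hyU⟩, hyI⟩
      exact ⟨hL y hyI hyL, hU y hyI hyU⟩
    rw [← map_nhds_subtype_val x] at hmem
    exact hmem

theorem statement14 {M : Type*} [TopologicalSpace M] [PolishSpace M]
    (causal : M → M → Prop)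
    (hclosed : IsClosed {x : M × M | causal x.1 x.2})
    (𝒯 : M → ℝ) (h𝒯 : Continuous 𝒯)
    (I : Set ℝ) (hI : I.OrdConnected) :
    IsClosed {γ : C(I, M) | (∀ t : I, 𝒯 (γ t) = (t : ℝ)) ∧
        ∀ s t : I, (s : ℝ) ≤ (t : ℝ) → causal (γ s) (γ t)} ∧
    PolishSpace {γ : C(I, M) | (∀ t : I, 𝒯 (γ t) = (t : ℝ)) ∧
        ∀ s t : I, (s : ℝ) ≤ (t : ℝ) → causal (γ s) (γ t)} := by
  haveI := ordConnected_weaklyLocallyCompact hI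
  letI := TopologicalSpace.upgradeIsCompletelyMetrizable M
  have h1 : IsClosed {γ : C(I, M) | ∀ t : I, 𝒯 (γ t) = (t : ℝ)} := by
    have : {γ : C(I, M) | ∀ t : I, 𝒯 (γ t) = (t : ℝ)} =
        ⋂ (t : I), {γ : C(I, M) | 𝒯 (γ t) = (t : ℝ)} := by
      ext γ; simp [Set.mem_iInter]
    rw [this]
    exact isClosed_iInter fun t => isClosed_eq
      (h𝒯.comp (continuous_eval_const t)) continuous_const
  have h2 : IsClosed {γ : C(I, M) | ∀ s t : I, (s : ℝ) ≤ (t : ℝ) → causal (γ s) (γ t)} := by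
    have : {γ : C(I, M) | ∀ s t : I, (s : ℝ) ≤ (t : ℝ) → causal (γ s) (γ t)} =
        ⋂ (s : I) (t : I) (_ : (s : ℝ) ≤ (t : ℝ)),
          (fun γ : C(I, M) => ((γ s, γ t) : M × M)) ⁻¹' {x : M × M | causal x.1 x.2} := by
      ext γ; simp [Set.mem_iInter]
    rw [this]
    exact isClosed_iInter fun s => isClosed_iInter fun t => isClosed_iInter fun _ =>
      hclosed.preimage (((continuous_eval_const s)).prodMk
        (continuous_eval_const t))
  have hcl : IsClosed {γ : C(I, M) | (∀ t : I, 𝒯 (γ t) = (t : ℝ)) ∧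
      ∀ s t : I, (s : ℝ) ≤ (t : ℝ) → causal (γ s) (γ t)} := by
    have : {γ : C(I, M) | (∀ t : I, 𝒯 (γ t) = (t : ℝ)) ∧
        ∀ s t : I, (s : ℝ) ≤ (t : ℝ) → causal (γ s) (γ t)} =
        {γ : C(I, M) | ∀ t : I, 𝒯 (γ t) = (t : ℝ)} ∩
        {γ : C(I, M) | ∀ s t : I, (s : ℝ) ≤ (t : ℝ) → causal (γ s) (γ t)} := rfl
    rw [this]
    exact h1.inter h2
  refine ⟨hcl, ?_⟩
  haveI : PolishSpace C(I, M) := inferInstance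
  exact hcl.polishSpace
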